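/- Consider the planar linear ODE system ẋ(t) = −bx(t) + a, ẏ(t) = −dy(t) + cx(t), with a ≥ 0, b, c, d > 0, and let θ > 0. Let (x, y) be a solution defined on ℝ with x(T) = (d/c)θ and y(T) = θ for some time T. If a/b > (d/c)θ, then for every t there does not hold both x(t) < (d/c)θ and y(t) < θ (the trajectory through the corner point never enters the region {x < (d/c)θ, y < θ}). If a/b < (d/c)θ, then for every t there does not hold both x(t) > (d/c)θ and y(t) > θ. -/

import Mathlib

/-- Lemma 2 of the paper: the trajectory through the corner point
((d/c)θ, θ) never enters the pseudo-state domain 00 = {x < (d/c)θ, y < θ} when the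
focal point is to the right (a/b > (d/c)θ), and never enters
11 = {x > (d/c)θ, y > θ} when a/b < (d/c)θ. -/
theorem no_passage_through_corners
    (a b c d θ : ℝ) (ha : 0 ≤ a) (hb : 0 < b) (hc : 0 < c) (hd : 0 < d) (hθ : 0 < θ)
    (x y : ℝ → ℝ) (T : ℝ)
    (hx : ∀ t, HasDerivAt x (-b * x t + a) t)
    (hy : ∀ t, HasDerivAt y (-d * y t + c * x t) t)
    (hxT : x T = d / c * θ) (hyT : y T = θ) :
    (a / b > d / c * θ → ∀ t : ℝ, ¬(x t < d / c * θ ∧ y t < θ)) ∧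
    (a / b < d / c * θ → ∀ t : ℝ, ¬(x t > d / c * θ ∧ y t > θ)) := by
  set X := d / c * θ with hXdef
  have hcX : c * X = d * θ := by rw [hXdef]; field_simp
  -- explicit formula for x
  have hxfor : ∀ t, x t - X = (a / b - X) * (1 - Real.exp (b * (T - t))) := by
    have hdiff : ∀ t, HasDerivAt (fun t => (x t - a / b) * Real.exp (b * t)) 0 t := by
      intro t
      have h1 : HasDerivAt (fun t => x t - a / b) (-b * x t + a) t := (hx t).sub_const _
      have h2 : HasDerivAt (fun t => Real.exp (b * t)) (b * Real.exp (b * t)) t := by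
        simpa [mul_comm, Function.comp_def] using
          (Real.hasDerivAt_exp (b * t)).comp t ((hasDerivAt_id t).const_mul b)
      have h3 := h1.mul h2
      refine h3.congr_deriv ?_
      linear_combination (-(Real.exp (b * t))) * div_mul_cancel₀ a hb.ne'
    have hconst : ∀ s : ℝ,
        (x s - a / b) * Real.exp (b * s) = (x T - a / b) * Real.exp (b * T) :=
      fun s => is_const_of_deriv_eq_zero
        (fun u => (hdiff u).differentiableAt) (fun u => (hdiff u).deriv) s T
    intro t
    have h := hconst t
    rw [hxT] at h
    have hexp : Real.exp (b * T) = Real.exp (b * (T - t)) * Real.exp (b * t) := by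
      rw [← Real.exp_add]; ring_nf
    rw [hexp] at h
    have h' : (x t - a / b) * Real.exp (b * t)
        = ((X - a / b) * Real.exp (b * (T - t))) * Real.exp (b * t) := by
      rw [h]; ring
    have hE : x t - a / b = (X - a / b) * Real.exp (b * (T - t)) :=
      mul_right_cancel₀ (Real.exp_ne_zero (b * t)) h'
    linear_combination hE
  -- derivative of w t = (y t - θ) * exp (d t)
  have hw : ∀ t, HasDerivAt (fun t => (y t - θ) * Real.exp (d * t))
      (c * Real.exp (d * t) * (x t - X)) t := by
    intro t
    have h1 : HasDerivAt (fun t => y t - θ) (-d * y t + c * x t) t := (hy t).sub_const _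
    have h2 : HasDerivAt (fun t => Real.exp (d * t)) (d * Real.exp (d * t)) t := by
      simpa [mul_comm, Function.comp_def] using
        (Real.hasDerivAt_exp (d * t)).comp t ((hasDerivAt_id t).const_mul d)
    have h3 := h1.mul h2
    refine h3.congr_deriv ?_
    linear_combination (Real.exp (d * t)) * hcX
  have hwcont : Continuous fun t => (y t - θ) * Real.exp (d * t) :=
    continuous_iff_continuousAt.mpr fun t => (hw t).continuousAt
  have hwT : (y T - θ) * Real.exp (d * T) = 0 := by rw [hyT]; ring
  have hexpgt : ∀ s : ℝ, s < T → (1 : ℝ) < Real.exp (b * (T - s)) := by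
    intro s hs
    rw [← Real.exp_zero]
    exact Real.exp_lt_exp.mpr (by nlinarith)
  constructor
  · -- focal point right: a/b > X
    intro hF t ⟨hxt, hyt⟩
    -- x t < X forces t < T
    have htT : t < T := by
      by_contra hge
      push_neg at hge
      have h1 : Real.exp (b * (T - t)) ≤ 1 := by
        rw [← Real.exp_zero]
        exact Real.exp_le_exp.mpr (by nlinarith)
      have := hxfor t
      nlinarith
    -- x s < X for all s < T
    have hxlt : ∀ s : ℝ, s < T → x s < X := by
      intro s hs
      have h1 := hexpgt s hs
      have := hxfor s
      nlinarith
    -- w strictly decreasing on [t, T]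
    have hanti : StrictAntiOn (fun t => (y t - θ) * Real.exp (d * t)) (Set.Icc t T) := by
      apply strictAntiOn_of_deriv_neg (convex_Icc t T) (hwcont.continuousOn)
      intro s hs
      rw [interior_Icc] at hs
      rw [(hw s).deriv]
      have hxs := hxlt s hs.2
      have he := Real.exp_pos (d * s)
      nlinarith [mul_pos (mul_pos hc he) (show (0:ℝ) < X - x s by linarith)]
    have key := hanti (Set.left_mem_Icc.mpr htT.le) (Set.right_mem_Icc.mpr htT.le) htT
    simp only [hyT, sub_self, zero_mul] at key
    have hep := Real.exp_pos (d * t)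
    nlinarith [mul_pos hep (show (0:ℝ) < θ - y t by linarith)]
  · -- focal point left: a/b < X
    intro hF t ⟨hxt, hyt⟩
    have htT : t < T := by
      by_contra hge
      push_neg at hge
      have h1 : Real.exp (b * (T - t)) ≤ 1 := by
        rw [← Real.exp_zero]
        exact Real.exp_le_exp.mpr (by nlinarith)
      have := hxfor t
      nlinarith
    have hxgt : ∀ s : ℝ, s < T → X < x s := by
      intro s hs
      have h1 := hexpgt s hs
      have := hxfor s
      nlinarith
    have hmono : StrictMonoOn (fun t => (y t - θ) * Real.exp (d * t)) (Set.Icc t T) := by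
      apply strictMonoOn_of_deriv_pos (convex_Icc t T) (hwcont.continuousOn)
      intro s hs
      rw [interior_Icc] at hs
      rw [(hw s).deriv]
      have hxs := hxgt s hs.2
      have he := Real.exp_pos (d * s)
      nlinarith [mul_pos (mul_pos hc he) (show (0:ℝ) < x s - X by linarith)]
    have key := hmono (Set.left_mem_Icc.mpr htT.le) (Set.right_mem_Icc.mpr htT.le) htT
    simp only [hyT, sub_self, zero_mul] at key
    have hep := Real.exp_pos (d * t)
    nlinarith [mul_pos hep (show (0:ℝ) < y t - θ by linarith)]
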